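/- arXiv:1805.07962 — 2 statements merged into one kernel-verified Lean document; each statement's English description precedes it below -/
import Mathlib

section
/- Consider the alternating projection iteration in ℝ²: with A = (2, 0), L_{k+1} = P_B((L_k − S_k + A)/2) and S_{k+1} = P_B((S_k − L_k + A)/2), starting from L_0 = (√2, √2) and S_0 = (√2, −√2). Then for every k ≥ 1, L_k = (√(2k−1)/√(2k+1), √2/√(2k+1)) and S_k = (√(2k−1)/√(2k+1), −√2/√(2k+1)). -/
noncomputable def vec2 (a b : ℝ) : EuclideanSpace ℝ (Fin 2) := WithLp.toLp 2 ![a, b]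

noncomputable def ballProj (x : EuclideanSpace ℝ (Fin 2)) : EuclideanSpace ℝ (Fin 2) :=
  if ‖x‖ ≤ 1 then x else ‖x‖⁻¹ • x

lemma vec2_add (a b c d : ℝ) : vec2 a b + vec2 c d = vec2 (a+c) (b+d) := by
  ext i; fin_cases i <;> simp [vec2]

lemma vec2_sub (a b c d : ℝ) : vec2 a b - vec2 c d = vec2 (a-c) (b-d) := by
  ext i; fin_cases i <;> simp [vec2]

lemma vec2_smul (c a b : ℝ) : c • vec2 a b = vec2 (c*a) (c*b) := by
  ext i; fin_cases i <;> simp [vec2]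

lemma vec2_norm (a b : ℝ) : ‖vec2 a b‖ = Real.sqrt (a^2 + b^2) := by
  rw [EuclideanSpace.norm_eq]
  simp [vec2, Fin.sum_univ_two, sq_abs]

lemma vec2_congr {a b c d : ℝ} (h1 : a = c) (h2 : b = d) : vec2 a b = vec2 c d := by
  rw [h1, h2]

lemma proj_step (b : ℝ) (hb : b ≠ 0) :
    ballProj (vec2 1 b) = vec2 (1 / Real.sqrt (1 + b^2)) (b / Real.sqrt (1 + b^2)) := by
  have hb2 : (0:ℝ) < b^2 := by positivity
  have h1 : (1:ℝ) < 1 + b^2 := by linarith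
  have hn : ‖vec2 1 b‖ = Real.sqrt (1 + b^2) := by rw [vec2_norm]; ring_nf
  have hgt : ¬ ‖vec2 1 b‖ ≤ 1 := by
    rw [hn]; push_neg
    calc (1:ℝ) = Real.sqrt 1 := by simp
    _ < Real.sqrt (1 + b^2) := Real.sqrt_lt_sqrt (by norm_num) h1
  rw [ballProj, if_neg hgt, hn, vec2_smul]
  ring_nf

lemma combo (a b c : ℝ) :
    (1/2 : ℝ) • (vec2 a b - vec2 a c + vec2 2 0) = vec2 1 ((b - c)/2) := by
  rw [vec2_sub, vec2_add, vec2_smul]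
  exact vec2_congr (by ring) (by ring)

/-- Closed form of the alternating projection iterates for the feasibility problem
`‖L‖ ≤ 1`, `‖S‖ ≤ 1`, `L + S = (2,0)` started from `L₀ = (√2, √2)`, `S₀ = (√2, −√2)`:
for every `k ≥ 1`, `L_k = (√(2k−1)/√(2k+1), √2/√(2k+1))` and
`S_k = (√(2k−1)/√(2k+1), −√2/√(2k+1))`. -/
theorem stmt_5 (L S : ℕ → EuclideanSpace ℝ (Fin 2))
    (hL0 : L 0 = vec2 (Real.sqrt 2) (Real.sqrt 2))
    (hS0 : S 0 = vec2 (Real.sqrt 2) (-Real.sqrt 2))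
    (hLrec : ∀ k : ℕ, L (k + 1) = ballProj ((1 / 2 : ℝ) • (L k - S k + vec2 2 0)))
    (hSrec : ∀ k : ℕ, S (k + 1) = ballProj ((1 / 2 : ℝ) • (S k - L k + vec2 2 0))) :
    ∀ k : ℕ, 1 ≤ k →
      L k = vec2 (Real.sqrt (2 * (k : ℝ) - 1) / Real.sqrt (2 * (k : ℝ) + 1))
                 (Real.sqrt 2 / Real.sqrt (2 * (k : ℝ) + 1)) ∧
      S k = vec2 (Real.sqrt (2 * (k : ℝ) - 1) / Real.sqrt (2 * (k : ℝ) + 1))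
                 (-(Real.sqrt 2 / Real.sqrt (2 * (k : ℝ) + 1))) := by
  intro k hk
  induction k, hk using Nat.le_induction with
  | base =>
    have hs2 : Real.sqrt 2 ≠ 0 := by positivity
    have hb : (Real.sqrt 2 - -Real.sqrt 2)/2 = Real.sqrt 2 := by ring
    have hb' : (-Real.sqrt 2 - Real.sqrt 2)/2 = -Real.sqrt 2 := by ring
    have h3 : 1 + Real.sqrt 2 ^ 2 = 3 := by
      rw [Real.sq_sqrt (by norm_num : (2:ℝ) ≥ 0)]; norm_num
    have h3' : 1 + (-Real.sqrt 2) ^ 2 = 3 := by rw [neg_pow]; simpa using h3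
    constructor
    · rw [hLrec 0, hL0, hS0, combo, hb, proj_step _ hs2, h3]
      exact vec2_congr (by norm_num [Real.sqrt_one]) (by norm_num)
    · rw [hSrec 0, hS0, hL0, combo, hb', proj_step _ (neg_ne_zero.mpr hs2), h3']
      exact vec2_congr (by norm_num [Real.sqrt_one]) (by norm_num [neg_div])
  | succ n hn ih =>
    obtain ⟨ihL, ihS⟩ := ih
    set B : ℝ := Real.sqrt 2 / Real.sqrt (2 * (n : ℝ) + 1) with hBdef
    have hc : (0:ℝ) < 2 * (n : ℝ) + 1 := by positivity
    have hd : (0:ℝ) < 2 * (n : ℝ) + 3 := by positivity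
    have hsc : Real.sqrt (2 * (n : ℝ) + 1) ≠ 0 := by positivity
    have hsd : Real.sqrt (2 * (n : ℝ) + 3) ≠ 0 := by positivity
    have hB : B ≠ 0 := by
      have : Real.sqrt 2 ≠ 0 := by positivity
      exact div_ne_zero this hsc
    have hB2 : 1 + B^2 = (2 * (n : ℝ) + 3) / (2 * (n : ℝ) + 1) := by
      rw [hBdef, div_pow, Real.sq_sqrt (by norm_num : (0:ℝ) ≤ 2),
        Real.sq_sqrt hc.le]
      field_simp
      ring
    have hsB : Real.sqrt (1 + B^2)
        = Real.sqrt (2 * (n : ℝ) + 3) / Real.sqrt (2 * (n : ℝ) + 1) := by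
      rw [hB2, Real.sqrt_div hd.le]
    have e1 : 2 * ((n : ℝ) + 1) - 1 = 2 * (n : ℝ) + 1 := by ring
    have e2 : 2 * ((n : ℝ) + 1) + 1 = 2 * (n : ℝ) + 3 := by ring
    have hfirst : 1 / Real.sqrt (1 + B^2)
        = Real.sqrt (2 * ((n+1 : ℕ) : ℝ) - 1) / Real.sqrt (2 * (((n+1 : ℕ)) : ℝ) + 1) := by
      push_cast
      rw [e1, e2, hsB]
      field_simp
    have hsecond : B / Real.sqrt (1 + B^2)
        = Real.sqrt 2 / Real.sqrt (2 * (((n+1 : ℕ)) : ℝ) + 1) := by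
      push_cast
      rw [e2, hsB, hBdef]
      field_simp
    constructor
    · rw [hLrec n, ihL, ihS, combo]
      have : (Real.sqrt 2 / Real.sqrt (2 * (n : ℝ) + 1)
          - -(Real.sqrt 2 / Real.sqrt (2 * (n : ℝ) + 1)))/2 = B := by rw [hBdef]; ring
      rw [this, proj_step _ hB]
      exact vec2_congr (by push_cast at hfirst ⊢; exact hfirst) hsecond
    · rw [hSrec n, ihS, ihL, combo]
      have : (-(Real.sqrt 2 / Real.sqrt (2 * (n : ℝ) + 1))
          - Real.sqrt 2 / Real.sqrt (2 * (n : ℝ) + 1))/2 = -B := by rw [hBdef]; ring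
      rw [this, proj_step _ (neg_ne_zero.mpr hB)]
      refine vec2_congr ?_ ?_
      · rw [neg_pow]; simpa using (by push_cast at hfirst ⊢; exact hfirst : 1 / Real.sqrt (1 + B^2) = _)
      · rw [neg_pow]
        simp only [neg_div, neg_one_sq, one_mul]
        push_cast at hsecond ⊢
        exact congrArg Neg.neg hsecond
end

section
/- Consider the alternating projection iteration in ℝ²: with A = (2, 0), L_{k+1} = P_B((L_k − S_k + A)/2) and S_{k+1} = P_B((S_k − L_k + A)/2), starting from L_0 = (√2, √2) and S_0 = (√2, −√2). Then for every k ≥ 1, the distance of L_k to the solution (1, 0) satisfies ‖L_k − (1, 0)‖ ≥ √2/√(2k+1). -/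
/-- second coordinate of the iterates -/
noncomputable def yv (k : ℕ) : ℝ := Real.sqrt (2 / (2 * (k:ℝ) + 1))

/-- first coordinate of the iterates -/
noncomputable def av : ℕ → ℝ
  | 0 => Real.sqrt 2
  | (k+1) => Real.sqrt ((2 * (k:ℝ) + 1) / (2 * (k:ℝ) + 3))

lemma denom_pos (k : ℕ) : (0:ℝ) < 2 * (k:ℝ) + 1 := by positivity

lemma yv_sq (k : ℕ) : yv k ^ 2 = 2 / (2 * (k:ℝ) + 1) := by
  rw [yv, Real.sq_sqrt]; positivity

/-- projection computation for the step -/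
lemma proj_step_s6 (k : ℕ) (t : ℝ) (ht : t^2 = yv k ^ 2) :
    ballProj (vec2 1 t) = vec2 (Real.sqrt ((2*(k:ℝ)+1)/(2*(k:ℝ)+3)))
      (Real.sqrt ((2*(k:ℝ)+1)/(2*(k:ℝ)+3)) * t) := by
  have hpos := denom_pos k
  have hn : ‖vec2 1 t‖ = Real.sqrt ((2*(k:ℝ)+3)/(2*(k:ℝ)+1)) := by
    rw [vec2_norm, ht, yv_sq]
    congr 1
    field_simp
    ring
  have h1 : (1:ℝ) < (2*(k:ℝ)+3)/(2*(k:ℝ)+1) := by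
    rw [lt_div_iff₀ hpos]; linarith
  have hgt : ¬ ‖vec2 1 t‖ ≤ 1 := by
    rw [hn]; push_neg
    nlinarith [Real.sq_sqrt (le_of_lt (lt_trans one_pos h1)),
      Real.sqrt_nonneg ((2*(k:ℝ)+3)/(2*(k:ℝ)+1))]
  rw [ballProj, if_neg hgt, hn, ← Real.sqrt_inv, inv_div, vec2_smul, mul_one]

lemma key (L S : ℕ → EuclideanSpace ℝ (Fin 2))
    (hL0 : L 0 = vec2 (Real.sqrt 2) (Real.sqrt 2))
    (hS0 : S 0 = vec2 (Real.sqrt 2) (-Real.sqrt 2))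
    (hLrec : ∀ k : ℕ, L (k + 1) = ballProj ((1 / 2 : ℝ) • (L k - S k + vec2 2 0)))
    (hSrec : ∀ k : ℕ, S (k + 1) = ballProj ((1 / 2 : ℝ) • (S k - L k + vec2 2 0))) :
    ∀ k : ℕ, L k = vec2 (av k) (yv k) ∧ S k = vec2 (av k) (-(yv k)) := by
  intro k
  induction k with
  | zero =>
      have ha : av 0 = Real.sqrt 2 := rfl
      have hy : yv 0 = Real.sqrt 2 := by unfold yv; norm_num
      rw [hL0, hS0, ha, hy]; exact ⟨rfl, rfl⟩
  | succ k ih =>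
      obtain ⟨hl, hs⟩ := ih
      have harg : (1 / 2 : ℝ) • (L k - S k + vec2 2 0) = vec2 1 (yv k) := by
        rw [hl, hs, vec2_sub, vec2_add, vec2_smul]
        congr 1 <;> ring
      have harg' : (1 / 2 : ℝ) • (S k - L k + vec2 2 0) = vec2 1 (-(yv k)) := by
        rw [hl, hs, vec2_sub, vec2_add, vec2_smul]
        congr 1 <;> ring
      have hy : Real.sqrt ((2*(k:ℝ)+1)/(2*(k:ℝ)+3)) * yv k = yv (k+1) := by
        rw [yv, yv, ← Real.sqrt_mul (by positivity)]
        congr 1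
        have hpos := denom_pos k
        push_cast
        field_simp
        ring
      have hav : av (k+1) = Real.sqrt ((2*(k:ℝ)+1)/(2*(k:ℝ)+3)) := rfl
      constructor
      · rw [hLrec k, harg, proj_step_s6 k (yv k) rfl, hav, hy]
      · rw [hSrec k, harg', proj_step_s6 k (-(yv k)) (by ring_nf), hav]
        congr 1
        rw [← hy]; ring

/-- For the alternating projection iterates for the feasibility problem `‖L‖ ≤ 1`,
`‖S‖ ≤ 1`, `L + S = (2,0)` started from `L₀ = (√2, √2)`, `S₀ = (√2, −√2)`, the distance
of `L_k` to the solution `(1, 0)` satisfies `‖L_k − (1,0)‖ ≥ √2/√(2k+1)` for all `k ≥ 1`. -/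
theorem stmt_6 (L S : ℕ → EuclideanSpace ℝ (Fin 2))
    (hL0 : L 0 = vec2 (Real.sqrt 2) (Real.sqrt 2))
    (hS0 : S 0 = vec2 (Real.sqrt 2) (-Real.sqrt 2))
    (hLrec : ∀ k : ℕ, L (k + 1) = ballProj ((1 / 2 : ℝ) • (L k - S k + vec2 2 0)))
    (hSrec : ∀ k : ℕ, S (k + 1) = ballProj ((1 / 2 : ℝ) • (S k - L k + vec2 2 0))) :
    ∀ k : ℕ, 1 ≤ k →
      Real.sqrt 2 / Real.sqrt (2 * (k : ℝ) + 1) ≤ ‖L k - vec2 1 0‖ := by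
  intro k _
  obtain ⟨hl, _⟩ := key L S hL0 hS0 hLrec hSrec k
  rw [hl, vec2_sub, vec2_norm, sub_zero]
  have h1 : Real.sqrt 2 / Real.sqrt (2 * (k:ℝ) + 1) = yv k := by
    rw [yv, Real.sqrt_div' 2 (by positivity)]
  rw [h1]
  have hy0 : 0 ≤ yv k := Real.sqrt_nonneg _
  calc yv k = Real.sqrt (yv k ^ 2) := (Real.sqrt_sq hy0).symm
    _ ≤ Real.sqrt ((av k - 1)^2 + yv k ^ 2) :=
        Real.sqrt_le_sqrt (by nlinarith [sq_nonneg (av k - 1)])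
end
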